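/- (Generalization of Motzkin's theorem to concave quadratic inequalities.) Let f₁,…,f_r and g₁,…,g_s be concave quadratic polynomials on ℝⁿ such that K = {x ∈ ℝⁿ : f₁(x) ≥ 0, …, f_r(x) ≥ 0, g₁(x) > 0, …, g_s(x) > 0} is empty, and suppose the NSOSC condition holds for f₁,…,f_r. Then there exist λ₁,…,λ_r ≥ 0, η₀,η₁,…,η_s ≥ 0 and a polynomial h of degree at most 2 that is a sum of squares, such that Σ_{i=1}^r λ_i f_i + Σ_{j=1}^s η_j g_j + η₀ + h is identically zero, and η₀ + η₁ + ⋯ + η_s = 1. -/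

import Mathlib

open Matrix MvPolynomial

/-- A real matrix is negative semidefinite if it is symmetric and its quadratic
form is nonpositive. -/
def IsNegSemidef {ι : Type*} [Fintype ι] (A : Matrix ι ι ℝ) : Prop :=
  A.IsSymm ∧ ∀ x : ι → ℝ, x ⬝ᵥ A.mulVec x ≤ 0

/-- A polynomial is a sum of squares. -/
def IsSOS {σ : Type*} (p : MvPolynomial σ ℝ) : Prop :=
  ∃ (k : ℕ) (q : Fin k → MvPolynomial σ ℝ), p = ∑ i, (q i) ^ 2

/-- A polynomial is concave quadratic (CQ): it has total degree at most 2,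
`p(x) = xᵀAx + bᵀx + c` with `A` symmetric negative semidefinite. -/
def IsCQ {σ : Type*} [Fintype σ] (p : MvPolynomial σ ℝ) : Prop :=
  ∃ (A : Matrix σ σ ℝ) (b : σ → ℝ) (c : ℝ), IsNegSemidef A ∧
    p = (∑ i, ∑ j, MvPolynomial.C (A i j) * MvPolynomial.X i * MvPolynomial.X j)
        + (∑ i, MvPolynomial.C (b i) * MvPolynomial.X i) + MvPolynomial.C c

namespace CQAux

noncomputable section

variable {m : Type*} [Fintype m]

/-- quadratic form -/
abbrev qf (A : Matrix m m ℝ) (x : m → ℝ) : ℝ := x ⬝ᵥ A *ᵥ x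

lemma sum_mulVec {ι : Type*} (s : Finset ι) (A : ι → Matrix m m ℝ) (x : m → ℝ) :
    (∑ k ∈ s, A k) *ᵥ x = ∑ k ∈ s, (A k) *ᵥ x := by
  ext i
  simp only [Matrix.mulVec, dotProduct, Finset.sum_apply, Matrix.sum_apply,
    Finset.sum_mul]
  rw [Finset.sum_comm]

lemma dotProduct_sum' {ι : Type*} (s : Finset ι) (x : m → ℝ) (v : ι → m → ℝ) :
    x ⬝ᵥ (∑ k ∈ s, v k) = ∑ k ∈ s, x ⬝ᵥ v k := by
  simp only [dotProduct, Finset.sum_apply, Finset.mul_sum]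
  rw [Finset.sum_comm]

lemma sum_dotProduct' {ι : Type*} (s : Finset ι) (v : ι → m → ℝ) (x : m → ℝ) :
    (∑ k ∈ s, v k) ⬝ᵥ x = ∑ k ∈ s, v k ⬝ᵥ x := by
  simp only [dotProduct, Finset.sum_apply, Finset.sum_mul]
  rw [Finset.sum_comm]

lemma dot_symm {A : Matrix m m ℝ} (hA : A.IsSymm) (x y : m → ℝ) :
    y ⬝ᵥ A *ᵥ x = x ⬝ᵥ A *ᵥ y := by
  conv_lhs => rw [Matrix.dotProduct_mulVec, ← hA, Matrix.vecMul_transpose,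
    dotProduct_comm]

lemma qf_add {A : Matrix m m ℝ} (hA : A.IsSymm) (x y : m → ℝ) :
    qf A (x + y) = qf A x + 2 * (x ⬝ᵥ A *ᵥ y) + qf A y := by
  simp only [qf, Matrix.mulVec_add, dotProduct_add, add_dotProduct]
  rw [dot_symm hA x y]
  ring

lemma qf_smul (A : Matrix m m ℝ) (t : ℝ) (x : m → ℝ) :
    qf A (t • x) = t ^ 2 * qf A x := by
  simp only [qf, Matrix.mulVec_smul, dotProduct_smul, smul_dotProduct,
    smul_eq_mul]
  ring

lemma qf_sum_smul {ι : Type*} (s : Finset ι) (d : ι → ℝ) (A : ι → Matrix m m ℝ)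
    (x : m → ℝ) : qf (∑ k ∈ s, d k • A k) x = ∑ k ∈ s, d k * qf (A k) x := by
  rw [qf, sum_mulVec, dotProduct_sum']
  refine Finset.sum_congr rfl fun k _ => ?_
  rw [Matrix.smul_mulVec, dotProduct_smul, smul_eq_mul]

lemma sum_smul_dot {ι : Type*} (s : Finset ι) (d : ι → ℝ) (b : ι → m → ℝ)
    (x : m → ℝ) : (∑ k ∈ s, d k • b k) ⬝ᵥ x = ∑ k ∈ s, d k * (b k ⬝ᵥ x) := by
  rw [sum_dotProduct']
  refine Finset.sum_congr rfl fun k _ => ?_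
  rw [smul_dotProduct, smul_eq_mul]

/-- the canonical degree-2 polynomial attached to data `(A, b, c)` -/
def quadPoly (A : Matrix m m ℝ) (b : m → ℝ) (c : ℝ) : MvPolynomial m ℝ :=
  (∑ i, ∑ j, MvPolynomial.C (A i j) * MvPolynomial.X i * MvPolynomial.X j)
    + (∑ i, MvPolynomial.C (b i) * MvPolynomial.X i) + MvPolynomial.C c

lemma isCQ_iff (p : MvPolynomial m ℝ) :
    IsCQ p ↔ ∃ (A : Matrix m m ℝ) (b : m → ℝ) (c : ℝ), IsNegSemidef A ∧
      p = quadPoly A b c := Iff.rfl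

lemma eval_quadPoly (A : Matrix m m ℝ) (b : m → ℝ) (c : ℝ) (x : m → ℝ) :
    eval x (quadPoly A b c) = qf A x + b ⬝ᵥ x + c := by
  simp only [quadPoly, map_add, map_sum, _root_.map_mul, eval_C, eval_X]
  congr 1
  · congr 1
    · simp only [qf, dotProduct, Matrix.mulVec, Finset.mul_sum]
      refine Finset.sum_congr rfl fun i _ => Finset.sum_congr rfl fun j _ => ?_
      ring

lemma totalDegree_quadPoly (A : Matrix m m ℝ) (b : m → ℝ) (c : ℝ) :
    (quadPoly A b c).totalDegree ≤ 2 := by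
  refine le_trans (totalDegree_add _ _) ?_
  rw [sup_le_iff]
  constructor
  · refine le_trans (totalDegree_add _ _) ?_
    rw [sup_le_iff]
    constructor
    · refine le_trans (totalDegree_finset_sum _ _) ?_
      refine Finset.sup_le fun i _ => ?_
      refine le_trans (totalDegree_finset_sum _ _) ?_
      refine Finset.sup_le fun j _ => ?_
      refine le_trans (totalDegree_mul _ _) ?_
      have h1 : (MvPolynomial.C (A i j) * MvPolynomial.X i :
          MvPolynomial m ℝ).totalDegree ≤ 1 := by
        refine le_trans (totalDegree_mul _ _) ?_
        simp [totalDegree_C, totalDegree_X]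
      have h2 : (MvPolynomial.X j : MvPolynomial m ℝ).totalDegree ≤ 1 := by
        simp [totalDegree_X]
      omega
    · refine le_trans (totalDegree_finset_sum _ _) ?_
      refine Finset.sup_le fun i _ => ?_
      refine le_trans (totalDegree_mul _ _) ?_
      simp [totalDegree_C, totalDegree_X]
  · simp [totalDegree_C]

/-- concavity of a quadratic with NSD matrix -/
lemma qf_concave {A : Matrix m m ℝ} (hA : A.IsSymm)
    (hneg : ∀ x : m → ℝ, qf A x ≤ 0) {a b : ℝ} (ha : 0 ≤ a) (hb : 0 ≤ b)
    (hab : a + b = 1) (x y : m → ℝ) :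
    a * qf A x + b * qf A y ≤ qf A (a • x + b • y) := by
  have key : qf A (a • x + b • y) - a * qf A x - b * qf A y
      = -(a * b) * qf A (x - y) := by
    have e1 : qf A (a • x + b • y)
        = a ^ 2 * qf A x + 2 * (a * b * (x ⬝ᵥ A *ᵥ y)) + b ^ 2 * qf A y := by
      rw [qf_add hA, qf_smul, qf_smul]
      have : (a • x) ⬝ᵥ A *ᵥ (b • y) = a * b * (x ⬝ᵥ A *ᵥ y) := by
        rw [Matrix.mulVec_smul, dotProduct_smul, smul_dotProduct]
        simp [smul_eq_mul]; ring
      rw [this]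
    have e2 : qf A (x - y) = qf A x - 2 * (x ⬝ᵥ A *ᵥ y) + qf A y := by
      have : x - y = x + (-1 : ℝ) • y := by ext i; simp; ring
      rw [this, qf_add hA, qf_smul]
      rw [Matrix.mulVec_smul, dotProduct_smul]
      simp [smul_eq_mul]; ring
    rw [e1, e2]
    have hb' : b = 1 - a := by linarith
    subst hb'
    ring
  nlinarith [hneg (x - y), mul_nonneg ha hb]

lemma nonpos_of_eps (a k : ℝ) (H : ∀ ε : ℝ, 0 < ε → a + ε * k ≤ 0) : a ≤ 0 := by
  by_contra hpos
  push_neg at hpos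
  have hden : (0:ℝ) < |k| + 1 := by positivity
  have hεpos : 0 < a / (|k| + 1) := by positivity
  have h := H _ hεpos
  have h2 : -(a / (|k| + 1) * |k|) ≤ a / (|k| + 1) * k := by
    nlinarith [neg_abs_le k]
  have h3 : a - a / (|k| + 1) * |k| = a / (|k| + 1) := by
    field_simp
    ring
  linarith

lemma eq_zero_of_affine (a s : ℝ) (H : ∀ t : ℝ, a + t * s ≤ 0) : s = 0 := by
  by_contra hs
  have h := H ((1 - a) / s)
  rw [div_mul_cancel₀ _ hs] at h
  linarith

lemma nonpos_of_smul_lt (x u : ℝ) (H : ∀ t : ℝ, 0 < t → t * x < u) : x ≤ 0 := by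
  by_contra hx
  push_neg at hx
  have h1 := H 1 one_pos
  rw [one_mul] at h1
  have hu : 0 < u := lt_trans hx h1
  have ht : 0 < (u + 1) / x := by positivity
  have h2 := H _ ht
  rw [div_mul_cancel₀ _ (ne_of_gt hx)] at h2
  linarith

lemma nonneg_leading (a b c : ℝ) (H : ∀ s : ℝ, 0 < s → 0 ≤ a * s ^ 2 + b * s + c) :
    0 ≤ a := by
  by_contra h
  push_neg at h
  set s := max 1 ((|b| + |c| + 1) / (-a)) with hs
  have hs1 : (1:ℝ) ≤ s := le_max_left _ _
  have hspos : 0 < s := by linarith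
  have hna : 0 < -a := by linarith
  have hsge : (|b| + |c| + 1) / (-a) ≤ s := le_max_right _ _
  have h2 : |b| + |c| + 1 ≤ -a * s := by
    rw [div_le_iff₀ hna] at hsge
    linarith
  have h3 := H s hspos
  have hb' : b * s ≤ |b| * s := by nlinarith [le_abs_self b]
  have hc' : c ≤ |c| * s := by nlinarith [le_abs_self c, abs_nonneg c]
  nlinarith [mul_le_mul_of_nonneg_right h2 hspos.le]

lemma nsd_mulVec_eq_zero {A : Matrix m m ℝ} (hA : A.IsSymm)
    (hneg : ∀ x : m → ℝ, qf A x ≤ 0) {x : m → ℝ} (hx : qf A x = 0) :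
    A *ᵥ x = 0 := by
  have key : ∀ y : m → ℝ, y ⬝ᵥ A *ᵥ x = 0 := by
    intro y
    have H : ∀ t : ℝ, qf A y + t * (2 * (y ⬝ᵥ A *ᵥ x)) ≤ 0 := by
      intro t
      have h := hneg (y + t • x)
      rw [qf_add hA, qf_smul, Matrix.mulVec_smul, dotProduct_smul,
        smul_eq_mul, hx] at h
      nlinarith [h]
    have := eq_zero_of_affine _ _ H
    linarith
  have h2 := key (A *ᵥ x)
  rwa [dotProduct_self_eq_zero] at h2

theorem isSOS_quadPoly {A : Matrix m m ℝ} {b : m → ℝ} {c : ℝ}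
    (hA : A.IsSymm) (h : ∀ x : m → ℝ, 0 ≤ qf A x + b ⬝ᵥ x + c) :
    IsSOS (quadPoly A b c) := by
  classical
  set Q : Matrix (Unit ⊕ m) (Unit ⊕ m) ℝ :=
    Matrix.fromBlocks (Matrix.of fun _ _ => c) (Matrix.of fun _ j => b j / 2)
      (Matrix.of fun i _ => b i / 2) A with hQdef
  have qQ : ∀ v : (Unit ⊕ m) → ℝ, qf Q v =
      c * (v (Sum.inl ()))^2 + (b ⬝ᵥ (v ∘ Sum.inr)) * (v (Sum.inl ()))
        + qf A (v ∘ Sum.inr) := by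
    intro v
    have hv : v = Sum.elim (v ∘ Sum.inl) (v ∘ Sum.inr) := (Sum.elim_comp_inl_inr v).symm
    rw [qf]
    conv_lhs => rw [hv]
    rw [hQdef, Matrix.fromBlocks_mulVec, sumElim_dotProduct_sumElim,
      dotProduct_add, dotProduct_add]
    simp only [Sum.elim_comp_inl, Sum.elim_comp_inr]
    have e1 : (v ∘ Sum.inl) ⬝ᵥ (Matrix.of fun _ _ => c) *ᵥ (v ∘ Sum.inl)
        = c * (v (Sum.inl ()))^2 := by
      simp [dotProduct, Matrix.mulVec]
      ring
    have e2 : (v ∘ Sum.inl) ⬝ᵥ (Matrix.of fun _ j => b j / 2) *ᵥ (v ∘ Sum.inr)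
        = (b ⬝ᵥ (v ∘ Sum.inr)) * (v (Sum.inl ())) / 2 := by
      simp only [dotProduct, Matrix.mulVec, Matrix.of_apply,
        Function.comp_apply, Finset.univ_unique, Finset.sum_singleton,
        PUnit.default_eq_unit, Finset.sum_mul, Finset.mul_sum, Finset.sum_div]
      refine Finset.sum_congr rfl fun i _ => ?_
      ring
    have e3 : (v ∘ Sum.inr) ⬝ᵥ (Matrix.of fun i _ => b i / 2) *ᵥ (v ∘ Sum.inl)
        = (b ⬝ᵥ (v ∘ Sum.inr)) * (v (Sum.inl ())) / 2 := by
      simp only [dotProduct, Matrix.mulVec, Matrix.of_apply,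
        Function.comp_apply, Finset.univ_unique, Finset.sum_singleton,
        PUnit.default_eq_unit, Finset.sum_mul, Finset.mul_sum, Finset.sum_div]
      refine Finset.sum_congr rfl fun i _ => ?_
      ring
    rw [e1, e2, e3]
    ring
  have hQsymm : Q.IsHermitian := by
    rw [Matrix.IsHermitian]
    ext k l
    rcases k with k | k <;> rcases l with l | l <;>
      simp [hQdef, Matrix.conjTranspose_apply, Matrix.fromBlocks]
    exact congrFun (congrFun hA k) l
  have hQpsd : Q.PosSemidef := by
    rw [Matrix.posSemidef_iff_dotProduct_mulVec]
    refine ⟨hQsymm, ?_⟩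
    intro v
    have hst : star v = v := by funext i; simp
    rw [hst]
    rcases eq_or_ne (v (Sum.inl ())) 0 with ht | ht
    · have hval := qQ v
      rw [ht] at hval
      have hq : 0 ≤ qf A (v ∘ Sum.inr) := by
        refine nonneg_leading _ (b ⬝ᵥ (v ∘ Sum.inr)) c fun s hs => ?_
        have h' := h (s • (v ∘ Sum.inr))
        rw [qf_smul, dotProduct_smul, smul_eq_mul] at h'
        linarith
      calc (0:ℝ) ≤ qf A (v ∘ Sum.inr) := hq
        _ = v ⬝ᵥ Q *ᵥ v := by rw [qf] at hval ⊢; rw [hval]; ring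
    · set t := v (Sum.inl ()) with htdef
      set x := v ∘ Sum.inr with hxdef
      have h' := h (t⁻¹ • x)
      rw [qf_smul, dotProduct_smul, smul_eq_mul] at h'
      have ht2 : (0:ℝ) < t ^ 2 := by positivity
      have hmul := mul_nonneg ht2.le h'
      have expand : t ^ 2 * (t⁻¹ ^ 2 * qf A x + t⁻¹ * (b ⬝ᵥ x) + c)
          = qf A x + (b ⬝ᵥ x) * t + c * t ^ 2 := by
        field_simp
      rw [expand] at hmul
      have hval := qQ v
      rw [qf] at hval
      rw [hval]
      rw [← htdef, ← hxdef]
      linarith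
  obtain ⟨B, hB⟩ : ∃ B : Matrix (Unit ⊕ m) (Unit ⊕ m) ℝ, Q = Bᴴ * B := by
    open scoped Matrix.Norms.L2Operator MatrixOrder in
    exact CStarAlgebra.nonneg_iff_eq_star_mul_self.mp hQpsd.nonneg
  set e : Fin (Fintype.card (Unit ⊕ m)) ≃ (Unit ⊕ m) := (Fintype.equivFin _).symm
    with hedef
  refine ⟨Fintype.card (Unit ⊕ m),
    fun k => MvPolynomial.C (B (e k) (Sum.inl ()))
      + ∑ i, MvPolynomial.C (B (e k) (Sum.inr i)) * MvPolynomial.X i, ?_⟩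
  apply MvPolynomial.funext
  intro x
  set vv : (Unit ⊕ m) → ℝ := Sum.elim (fun _ => (1:ℝ)) x with hvvdef
  have evq : ∀ k, eval x (MvPolynomial.C (B (e k) (Sum.inl ()))
      + ∑ i, MvPolynomial.C (B (e k) (Sum.inr i)) * MvPolynomial.X i)
      = B (e k) ⬝ᵥ vv := by
    intro k
    simp only [map_add, map_sum, _root_.map_mul, eval_C, eval_X, hvvdef,
      dotProduct, Fintype.sum_sum_type, Sum.elim_inl, Sum.elim_inr,
      Finset.univ_unique, Finset.sum_singleton, PUnit.default_eq_unit, mul_one]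
  simp only [map_sum]
  have step1 : ∑ k, eval x ((MvPolynomial.C (B (e k) (Sum.inl ()))
      + ∑ i, MvPolynomial.C (B (e k) (Sum.inr i)) * MvPolynomial.X i) ^ 2)
      = ∑ k, (B (e k) ⬝ᵥ vv) ^ 2 := by
    refine Finset.sum_congr rfl fun k _ => ?_
    rw [map_pow, evq]
  rw [step1]
  have step2 : ∑ k, (B (e k) ⬝ᵥ vv) ^ 2 = ∑ l, (B l ⬝ᵥ vv) ^ 2 :=
    Equiv.sum_comp e (fun l => (B l ⬝ᵥ vv) ^ 2)
  rw [step2]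
  have step3 : ∑ l, (B l ⬝ᵥ vv) ^ 2 = (B *ᵥ vv) ⬝ᵥ (B *ᵥ vv) := by
    simp [dotProduct, Matrix.mulVec, pow_two]
  have step4 : qf Q vv = (B *ᵥ vv) ⬝ᵥ (B *ᵥ vv) := by
    rw [qf, hB]
    have hBconj : B.conjTranspose = B.transpose := by
      ext i j
      simp [Matrix.conjTranspose_apply]
    rw [hBconj, ← Matrix.mulVec_mulVec, Matrix.dotProduct_mulVec,
      Matrix.vecMul_transpose]
  have step5 : qf Q vv = eval x (quadPoly A b c) := by
    rw [qQ vv, eval_quadPoly]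
    have h1 : vv (Sum.inl ()) = 1 := rfl
    have h2 : vv ∘ Sum.inr = x := rfl
    rw [h1, h2]
    ring
  rw [step3, ← step4, step5]

section Euclid

variable {n : ℕ}

/-- identity conversions between `EuclideanSpace` and pi type -/
def toE {κ : Type*} [Fintype κ] (v : κ → ℝ) : EuclideanSpace ℝ κ := WithLp.toLp 2 v
def toPi {κ : Type*} [Fintype κ] (v : EuclideanSpace ℝ κ) : κ → ℝ := v.ofLp

lemma inner_eq_dot {κ : Type*} [Fintype κ] (x y : EuclideanSpace ℝ κ) :
    (inner ℝ x y : ℝ) = toPi x ⬝ᵥ toPi y := by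
  simp [PiLp.inner_apply, RCLike.inner_apply, dotProduct, toPi]
  exact Finset.sum_congr rfl fun i _ => mul_comm _ _

lemma exists_proj_matrix {ι : Type*} [Fintype ι] (bv : ι → Fin n → ℝ) :
    ∃ M : Matrix (Fin n) (Fin n) ℝ,
      (∀ (x : Fin n → ℝ) (i : ι), bv i ⬝ᵥ (M *ᵥ x) = 0) ∧
      (∀ x : Fin n → ℝ, (∀ i, bv i ⬝ᵥ x = 0) → M *ᵥ x = x) := by
  classical
  set W : Submodule ℝ (EuclideanSpace ℝ (Fin n)) :=
    Submodule.span ℝ (Set.range fun i => toE (bv i)) with hW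
  set V := Wᗮ with hV
  set Pl : EuclideanSpace ℝ (Fin n) →ₗ[ℝ] EuclideanSpace ℝ (Fin n) :=
    V.subtype.comp (V.orthogonalProjectionOnto).toLinearMap with hPl
  set Kfun : (Fin n → ℝ) →ₗ[ℝ] (Fin n → ℝ) :=
    ((WithLp.linearEquiv 2 ℝ (Fin n → ℝ)).toLinearMap.comp
      (Pl.comp (WithLp.linearEquiv 2 ℝ (Fin n → ℝ)).symm.toLinearMap)) with hKfun
  have hbW : ∀ i, toE (bv i) ∈ W := fun i => Submodule.subset_span ⟨i, rfl⟩
  have hMv : ∀ x : Fin n → ℝ, (LinearMap.toMatrix' Kfun) *ᵥ x = Kfun x := by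
    intro x
    rw [← Matrix.toLin'_apply, Matrix.toLin'_toMatrix']
  refine ⟨LinearMap.toMatrix' Kfun, ?_, ?_⟩
  · intro x i
    rw [hMv]
    have hmem : toE (Kfun x) ∈ V := SetLike.coe_mem ((V.orthogonalProjectionOnto) (toE x))
    have h0 : (inner ℝ (toE (bv i)) (toE (Kfun x)) : ℝ) = 0 :=
      Submodule.inner_right_of_mem_orthogonal (hbW i) hmem
    rw [inner_eq_dot] at h0
    exact h0
  · intro x hx
    have hxV : toE x ∈ V := by
      rw [hV, Submodule.mem_orthogonal]
      intro u hu
      rw [hW] at hu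
      induction hu using Submodule.span_induction with
      | mem y hy =>
        obtain ⟨i, rfl⟩ := hy
        rw [inner_eq_dot]
        exact hx i
      | zero => exact inner_zero_left _
      | add a b _ _ ha hb => rw [inner_add_left, ha, hb]; ring
      | smul t a _ ha => rw [real_inner_smul_left, ha]; ring
    rw [hMv]
    have h1 : V.orthogonalProjectionOnto (toE x) = ⟨toE x, hxV⟩ :=
      Submodule.orthogonalProjectionOnto_mem_subspace_eq_self (⟨toE x, hxV⟩ : V)
    show toPi (V.subtype ((V.orthogonalProjectionOnto) (toE x))) = x
    rw [h1]
    rfl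

theorem extension_lemma {H : Matrix (Fin n) (Fin n) ℝ} (hH : H.IsSymm)
    (hneg : ∀ x : Fin n → ℝ, qf H x ≤ 0)
    {ι : Type*} [Fintype ι] (bv : ι → Fin n → ℝ) (cc : ι → ℝ)
    (β : Fin n → ℝ) (γ : ℝ) (x₀ : Fin n → ℝ)
    (hx₀ : ∀ i, bv i ⬝ᵥ x₀ + cc i = 0)
    (hq : ∀ x : Fin n → ℝ, (∀ i, bv i ⬝ᵥ x + cc i = 0) →
      qf H x + β ⬝ᵥ x + γ ≤ 0) :
    ∃ cmu : ι → ℝ, ∀ x : Fin n → ℝ,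
      qf H x + β ⬝ᵥ x + γ ≤ ∑ i, cmu i * (bv i ⬝ᵥ x + cc i) := by
  classical
  set q : (Fin n → ℝ) → ℝ := fun x => qf H x + β ⬝ᵥ x + γ with hqdef
  have qexp : ∀ x d : Fin n → ℝ,
      q (x + d) = q x + ((2:ℝ) • (H *ᵥ x) + β) ⬝ᵥ d + qf H d := by
    intro x d
    simp only [hqdef]
    rw [qf_add hH, dotProduct_add, add_dotProduct,
      smul_dotProduct]
    have h1 : (H *ᵥ x) ⬝ᵥ d = x ⬝ᵥ H *ᵥ d := by
      rw [dotProduct_comm, dot_symm hH x d]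
    rw [h1, smul_eq_mul]
    ring
  set W : Submodule ℝ (EuclideanSpace ℝ (Fin n)) :=
    Submodule.span ℝ (Set.range fun i => toE (bv i)) with hW
  set V := Wᗮ with hV
  have hbW : ∀ i, toE (bv i) ∈ W := fun i => Submodule.subset_span ⟨i, rfl⟩
  have hL : ∀ v : EuclideanSpace ℝ (Fin n), v ∈ V → ∀ t : ℝ,
      ∀ i, bv i ⬝ᵥ (x₀ + t • toPi v) + cc i = 0 := by
    intro v hv t i
    rw [dotProduct_add, dotProduct_smul, smul_eq_mul]
    have hz : bv i ⬝ᵥ toPi v = 0 := by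
      have h0 : (inner ℝ (toE (bv i)) v : ℝ) = 0 :=
        Submodule.inner_right_of_mem_orthogonal (hbW i) hv
      rw [inner_eq_dot] at h0
      exact h0
    rw [hz]
    have := hx₀ i
    linarith
  set Pl : EuclideanSpace ℝ (Fin n) →ₗ[ℝ] EuclideanSpace ℝ (Fin n) :=
    V.subtype.comp (V.orthogonalProjectionOnto).toLinearMap with hPl
  set Hl : EuclideanSpace ℝ (Fin n) →ₗ[ℝ] EuclideanSpace ℝ (Fin n) :=
    ((WithLp.linearEquiv 2 ℝ (Fin n → ℝ)).symm.toLinearMap.comp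
      ((Matrix.mulVecLin H).comp (WithLp.linearEquiv 2 ℝ (Fin n → ℝ)).toLinearMap))
    with hHl
  have hPlmem : ∀ v : EuclideanSpace ℝ (Fin n), Pl v ∈ V :=
    fun v => SetLike.coe_mem ((V.orthogonalProjectionOnto) v)
  have hPlself : ∀ v : EuclideanSpace ℝ (Fin n), v ∈ V → Pl v = v := by
    intro v hv
    have h1 : V.orthogonalProjectionOnto v = ⟨v, hv⟩ :=
      Submodule.orthogonalProjectionOnto_mem_subspace_eq_self (⟨v, hv⟩ : V)
    show V.subtype ((V.orthogonalProjectionOnto) v) = v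
    rw [h1]
    rfl
  have Psym : ∀ a b : EuclideanSpace ℝ (Fin n),
      (inner ℝ (Pl a) b : ℝ) = inner ℝ a (Pl b) :=
    fun a b => Submodule.inner_starProjection_left_eq_right V a b
  have Hsym : ∀ a b : EuclideanSpace ℝ (Fin n),
      (inner ℝ (Hl a) b : ℝ) = inner ℝ a (Hl b) := by
    intro a b
    have e1 : (inner ℝ (Hl a) b : ℝ) = (H *ᵥ toPi a) ⬝ᵥ toPi b := inner_eq_dot _ _
    have e2 : (inner ℝ a (Hl b) : ℝ) = toPi a ⬝ᵥ (H *ᵥ toPi b) := inner_eq_dot _ _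
    rw [e1, e2, dotProduct_comm, dot_symm hH]
  set Tl := Pl.comp (Hl.comp Pl) with hTl
  have Tsym : ∀ a b : EuclideanSpace ℝ (Fin n),
      (inner ℝ (Tl a) b : ℝ) = inner ℝ a (Tl b) := by
    intro a b
    show (inner ℝ (Pl (Hl (Pl a))) b : ℝ) = inner ℝ a (Pl (Hl (Pl b)))
    rw [Psym, Hsym, Psym]
  set gE : EuclideanSpace ℝ (Fin n) := toE ((2:ℝ) • (H *ᵥ x₀) + β) with hgE
  have TKer : ∀ u : EuclideanSpace ℝ (Fin n), Tl u = 0 →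
      (inner ℝ u (Pl gE) : ℝ) = 0 := by
    intro u hu
    have hu' : Pl (Hl (Pl u)) = 0 := hu
    have h1 : (inner ℝ (Pl u) (Hl (Pl u)) : ℝ) = qf H (toPi (Pl u)) :=
      inner_eq_dot _ _
    have h2 : (inner ℝ (Pl u) (Hl (Pl u)) : ℝ) = inner ℝ u (Pl (Hl (Pl u))) :=
      Psym _ _
    rw [hu', inner_zero_right] at h2
    have hqf0 : qf H (toPi (Pl u)) = 0 := h1.symm.trans h2
    have gv : ((2:ℝ) • (H *ᵥ x₀) + β) ⬝ᵥ toPi (Pl u) = 0 := by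
      have haff : ∀ t : ℝ,
          q x₀ + t * (((2:ℝ) • (H *ᵥ x₀) + β) ⬝ᵥ toPi (Pl u)) ≤ 0 := by
        intro t
        have hmem := hL (Pl u) (hPlmem u) t
        have hle : q (x₀ + t • toPi (Pl u)) ≤ 0 := hq _ hmem
        have hexp := qexp x₀ (t • toPi (Pl u))
        rw [qf_smul, hqf0, dotProduct_smul, smul_eq_mul] at hexp
        rw [hexp] at hle
        nlinarith [hle]
      exact eq_zero_of_affine _ _ haff
    have h3 : (inner ℝ u (Pl gE) : ℝ) = inner ℝ (Pl u) gE := (Psym u gE).symm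
    rw [h3, inner_eq_dot, dotProduct_comm]
    exact gv
  have hle : LinearMap.range Tl ≤ (LinearMap.ker Tl)ᗮ := by
    rintro y ⟨z, rfl⟩
    rw [Submodule.mem_orthogonal]
    intro u hu
    have hu' : Tl u = 0 := hu
    have h1 : (inner ℝ u (Tl z) : ℝ) = inner ℝ (Tl u) z := (Tsym u z).symm
    rw [hu', inner_zero_left] at h1
    exact h1
  have hfr : Module.finrank ℝ (LinearMap.range Tl)
      = Module.finrank ℝ ((LinearMap.ker Tl)ᗮ) := by
    have h1 := LinearMap.finrank_range_add_finrank_ker Tl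
    have h2 := Submodule.finrank_add_finrank_orthogonal (LinearMap.ker Tl)
    omega
  have hrange := Submodule.eq_of_le_of_finrank_eq hle hfr
  have hPg : Pl gE ∈ (LinearMap.ker Tl)ᗮ := by
    rw [Submodule.mem_orthogonal]
    intro u hu
    exact TKer u hu
  rw [← hrange] at hPg
  have hPg2 : ((-(1:ℝ)/2) • Pl gE) ∈ LinearMap.range Tl :=
    Submodule.smul_mem _ _ hPg
  obtain ⟨y₀, hy₀⟩ := hPg2
  have hv₀V : Pl y₀ ∈ V := hPlmem y₀
  set ξ : Fin n → ℝ := ((2:ℝ) • (H *ᵥ x₀) + β) + (2:ℝ) • (H *ᵥ toPi (Pl y₀))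
    with hξ
  set ξE : EuclideanSpace ℝ (Fin n) := toE ξ with hξE
  have hPlξ : Pl ξE = 0 := by
    have h1 : ξE = gE + (2:ℝ) • Hl (Pl y₀) := rfl
    rw [h1, map_add, _root_.map_smul]
    have h2 : Pl (Hl (Pl y₀)) = Tl y₀ := rfl
    rw [h2, hy₀, smul_smul]
    norm_num
  have hξW : ξE ∈ W := by
    have h1 : V.orthogonalProjectionOnto ξE = 0 := by
      have h2 : V.subtype ((V.orthogonalProjectionOnto) ξE) = 0 := hPlξ
      exact Subtype.ext h2
    rw [Submodule.orthogonalProjectionOnto_eq_zero_iff] at h1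
    rw [hV, Submodule.orthogonal_orthogonal] at h1
    exact h1
  obtain ⟨cmu, hcmu⟩ := (Submodule.mem_span_range_iff_exists_fun ℝ).1 hξW
  refine ⟨cmu, ?_⟩
  intro x
  set xs : Fin n → ℝ := x₀ + toPi (Pl y₀) with hxs
  have hxsL : ∀ i, bv i ⬝ᵥ xs + cc i = 0 := by
    intro i
    have h1 := hL (Pl y₀) hv₀V 1 i
    rw [one_smul] at h1
    exact h1
  have hqxs : q xs ≤ 0 := hq xs hxsL
  have hdec : q x = q xs + ξ ⬝ᵥ (x - xs) + qf H (x - xs) := by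
    have hxx : xs + (x - xs) = x := by abel
    have h1 := qexp xs (x - xs)
    rw [hxx] at h1
    rw [h1]
    have hcoef : (2:ℝ) • (H *ᵥ xs) + β = ξ := by
      rw [hξ, hxs, Matrix.mulVec_add, smul_add]
      abel
    rw [hcoef]
  have hxi_dot : ξ ⬝ᵥ (x - xs) = ∑ i, cmu i * (bv i ⬝ᵥ (x - xs)) := by
    have h1 : ξ ⬝ᵥ (x - xs) = (inner ℝ ξE (toE (x - xs)) : ℝ) :=
      (inner_eq_dot ξE (toE (x - xs))).symm
    rw [h1, ← hcmu, sum_inner]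
    refine Finset.sum_congr rfl fun i _ => ?_
    rw [real_inner_smul_left, inner_eq_dot]
    rfl
  have hdot : ∀ i, bv i ⬝ᵥ (x - xs) = bv i ⬝ᵥ x + cc i := by
    intro i
    rw [dotProduct_sub]
    have := hxsL i
    linarith
  have hsum : ∑ i, cmu i * (bv i ⬝ᵥ (x - xs)) = ∑ i, cmu i * (bv i ⬝ᵥ x + cc i) := by
    refine Finset.sum_congr rfl fun i _ => ?_
    rw [hdot]
  have hqf : qf H (x - xs) ≤ 0 := hneg _
  show q x ≤ _
  rw [hdec, hxi_dot, hsum]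
  linarith

end Euclid

section Separation

lemma combo_pos {a b p q : ℝ} (ha : 0 ≤ a) (hb : 0 ≤ b) (hab : a + b = 1)
    (hp : 0 < p) (hq : 0 < q) : 0 < a * p + b * q := by
  rcases eq_or_lt_of_le ha with h | h
  · have hb1 : b = 1 := by linarith
    rw [← h, hb1]; linarith
  · nlinarith [mul_nonneg hb hq.le]

theorem separation {n r s : ℕ}
    (F : Fin r → (Fin n → ℝ) → ℝ) (G : Fin s → (Fin n → ℝ) → ℝ)
    (hFconc : ∀ (i : Fin r) (a b : ℝ) (x y : Fin n → ℝ), 0 ≤ a → 0 ≤ b →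
      a + b = 1 → a * F i x + b * F i y ≤ F i (a • x + b • y))
    (hGconc : ∀ (j : Fin s) (a b : ℝ) (x y : Fin n → ℝ), 0 ≤ a → 0 ≤ b →
      a + b = 1 → a * G j x + b * G j y ≤ G j (a • x + b • y))
    (hK : ¬ ∃ x : Fin n → ℝ, (∀ i, 0 ≤ F i x) ∧ (∀ j, 0 < G j x)) :
    ∃ (lam : Fin r → ℝ) (η : Fin s → ℝ) (u : ℝ),
      (∀ i, 0 ≤ lam i) ∧ (∀ j, 0 ≤ η j) ∧ 0 ≤ u ∧
      (¬(lam = 0 ∧ η = 0 ∧ u = 0)) ∧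
      ∀ x : Fin n → ℝ, (∑ i, lam i * F i x) + (∑ j, η j * G j x) + u ≤ 0 := by
  classical
  set O : Set ((Fin r → ℝ) × (Fin s → ℝ)) :=
    {y | (∀ i, 0 < y.1 i) ∧ (∀ j, 0 < y.2 j)} with hOdef
  set D : Set ((Fin r → ℝ) × (Fin s → ℝ)) :=
    {y | ∃ x : Fin n → ℝ, (∀ i, y.1 i ≤ F i x) ∧ (∀ j, y.2 j ≤ G j x)} with hDdef
  have hOopen : IsOpen O := by
    have hform : O = (⋂ i, {y : (Fin r → ℝ) × (Fin s → ℝ) | 0 < y.1 i})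
        ∩ ⋂ j, {y : (Fin r → ℝ) × (Fin s → ℝ) | 0 < y.2 j} := by
      ext y
      simp [hOdef, Set.mem_iInter]
    rw [hform]
    refine IsOpen.inter ?_ ?_
    · exact isOpen_iInter_of_finite fun i =>
        isOpen_lt continuous_const ((continuous_apply i).comp continuous_fst)
    · exact isOpen_iInter_of_finite fun j =>
        isOpen_lt continuous_const ((continuous_apply j).comp continuous_snd)
  have hOconv : Convex ℝ O := by
    rintro y ⟨hy1, hy2⟩ z ⟨hz1, hz2⟩ a b ha hb hab
    constructor
    · intro i
      have : (a • y + b • z).1 i = a * y.1 i + b * z.1 i := rfl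
      rw [this]
      exact combo_pos ha hb hab (hy1 i) (hz1 i)
    · intro j
      have : (a • y + b • z).2 j = a * y.2 j + b * z.2 j := rfl
      rw [this]
      exact combo_pos ha hb hab (hy2 j) (hz2 j)
  have hDconv : Convex ℝ D := by
    rintro y ⟨xy, hy1, hy2⟩ z ⟨xz, hz1, hz2⟩ a b ha hb hab
    refine ⟨a • xy + b • xz, fun i => ?_, fun j => ?_⟩
    · have h1 : (a • y + b • z).1 i = a * y.1 i + b * z.1 i := rfl
      rw [h1]
      refine le_trans ?_ (hFconc i a b xy xz ha hb hab)
      have := mul_le_mul_of_nonneg_left (hy1 i) ha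
      have := mul_le_mul_of_nonneg_left (hz1 i) hb
      linarith
    · have h1 : (a • y + b • z).2 j = a * y.2 j + b * z.2 j := rfl
      rw [h1]
      refine le_trans ?_ (hGconc j a b xy xz ha hb hab)
      have := mul_le_mul_of_nonneg_left (hy2 j) ha
      have := mul_le_mul_of_nonneg_left (hz2 j) hb
      linarith
  have hdisj : Disjoint O D := by
    rw [Set.disjoint_left]
    rintro y ⟨hy1, hy2⟩ ⟨x, hx1, hx2⟩
    exact hK ⟨x, fun i => le_trans (hy1 i).le (hx1 i),
      fun j => lt_of_lt_of_le (hy2 j) (hx2 j)⟩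
  obtain ⟨φ, u, hφO, hφD⟩ := geometric_hahn_banach_open hOconv hOopen hDconv hdisj
  set ones : (Fin r → ℝ) × (Fin s → ℝ) := ((fun _ => 1), (fun _ => 1)) with hones
  have honesO : ones ∈ O := ⟨fun _ => one_pos, fun _ => one_pos⟩
  have hφO_nonpos : ∀ a ∈ O, φ a ≤ 0 := by
    intro a ha
    refine nonpos_of_smul_lt (φ a) u fun t ht => ?_
    have htO : t • a ∈ O := ⟨fun i => mul_pos ht (ha.1 i), fun j => mul_pos ht (ha.2 j)⟩
    have := hφO _ htO
    rwa [_root_.map_smul, smul_eq_mul] at this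
  have hupos : 0 ≤ u := by
    have h1 : -u ≤ 0 := by
      refine nonpos_of_eps (-u) (φ ones) fun ε hε => ?_
      have hεO : ε • ones ∈ O := ⟨fun i => by simpa [hones] using hε,
        fun j => by simpa [hones] using hε⟩
      have := hφO _ hεO
      rw [_root_.map_smul, smul_eq_mul] at this
      linarith
    linarith
  set lam : Fin r → ℝ := fun i => -φ (Pi.single i 1, 0) with hlamdef
  set η : Fin s → ℝ := fun j => -φ (0, Pi.single j 1) with hηdef
  have hεmem : ∀ (w : (Fin r → ℝ) × (Fin s → ℝ)), (∀ i, 0 ≤ w.1 i) →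
      (∀ j, 0 ≤ w.2 j) → ∀ ε : ℝ, 0 < ε → w + ε • ones ∈ O := by
    intro w hw1 hw2 ε hε
    constructor
    · intro i
      have : (w + ε • ones).1 i = w.1 i + ε := by simp [hones]
      rw [this]
      have := hw1 i
      linarith
    · intro j
      have : (w + ε • ones).2 j = w.2 j + ε := by simp [hones]
      rw [this]
      have := hw2 j
      linarith
  have hclosed_nonpos : ∀ (w : (Fin r → ℝ) × (Fin s → ℝ)), (∀ i, 0 ≤ w.1 i) →
      (∀ j, 0 ≤ w.2 j) → φ w ≤ 0 := by
    intro w hw1 hw2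
    refine nonpos_of_eps (φ w) (φ ones) fun ε hε => ?_
    have := hφO_nonpos _ (hεmem w hw1 hw2 ε hε)
    rwa [map_add, _root_.map_smul, smul_eq_mul] at this
  have hlam : ∀ i, 0 ≤ lam i := by
    intro i
    have := hclosed_nonpos (Pi.single i 1, 0)
      (fun k => by by_cases h : k = i <;> simp [Pi.single_apply, h])
      (fun k => le_refl 0)
    simp only [hlamdef]
    linarith
  have hη : ∀ j, 0 ≤ η j := by
    intro j
    have := hclosed_nonpos (0, Pi.single j 1)
      (fun k => le_refl 0)
      (fun k => by by_cases h : k = j <;> simp [Pi.single_apply, h])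
    simp only [hηdef]
    linarith
  have hsingle : ∀ {k : ℕ} (v : Fin k → ℝ) (i : Fin k),
      (Pi.single i (v i) : Fin k → ℝ) = v i • (Pi.single i (1:ℝ) : Fin k → ℝ) := by
    intro k v i
    ext l
    by_cases h : l = i
    · subst h
      simp
    · simp [Pi.single_apply, h]
  have key1 : ∀ v : Fin r → ℝ,
      φ (v, (0 : Fin s → ℝ)) = ∑ i, v i * φ ((Pi.single i (1:ℝ) : Fin r → ℝ),
        (0 : Fin s → ℝ)) := by
    intro v
    have hv : v = ∑ i, v i • (Pi.single i (1:ℝ) : Fin r → ℝ) := by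
      conv_lhs => rw [← Finset.univ_sum_single v]
      exact Finset.sum_congr rfl fun i _ => hsingle v i
    have hpair : (v, (0 : Fin s → ℝ))
        = ∑ i, (v i • ((Pi.single i (1:ℝ) : Fin r → ℝ), (0 : Fin s → ℝ))) := by
      apply Prod.ext
      · rw [Prod.fst_sum]
        exact hv
      · rw [Prod.snd_sum]
        simp
    rw [hpair, map_sum]
    exact Finset.sum_congr rfl fun i _ => by rw [_root_.map_smul, smul_eq_mul]
  have key2 : ∀ v : Fin s → ℝ,
      φ ((0 : Fin r → ℝ), v) = ∑ j, v j * φ ((0 : Fin r → ℝ),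
        (Pi.single j (1:ℝ) : Fin s → ℝ)) := by
    intro v
    have hv : v = ∑ j, v j • (Pi.single j (1:ℝ) : Fin s → ℝ) := by
      conv_lhs => rw [← Finset.univ_sum_single v]
      exact Finset.sum_congr rfl fun j _ => hsingle v j
    have hpair : ((0 : Fin r → ℝ), v)
        = ∑ j, (v j • ((0 : Fin r → ℝ), (Pi.single j (1:ℝ) : Fin s → ℝ))) := by
      apply Prod.ext
      · rw [Prod.fst_sum]
        simp
      · rw [Prod.snd_sum]
        exact hv
    rw [hpair, map_sum]
    exact Finset.sum_congr rfl fun j _ => by rw [_root_.map_smul, smul_eq_mul]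
  have hrep : ∀ w : (Fin r → ℝ) × (Fin s → ℝ),
      φ w = -(∑ i, w.1 i * lam i) - (∑ j, w.2 j * η j) := by
    intro w
    have hsplit : w = (w.1, (0 : Fin s → ℝ)) + ((0 : Fin r → ℝ), w.2) := by
      ext <;> simp
    have hstep : φ w = φ (w.1, (0 : Fin s → ℝ)) + φ ((0 : Fin r → ℝ), w.2) := by
      conv_lhs => rw [hsplit]
      exact map_add _ _ _
    rw [hstep, key1, key2]
    have e1 : ∀ i, φ ((Pi.single i (1:ℝ) : Fin r → ℝ), (0 : Fin s → ℝ))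
        = -lam i := by
      intro i
      simp [hlamdef]
    have e2 : ∀ j, φ ((0 : Fin r → ℝ), (Pi.single j (1:ℝ) : Fin s → ℝ))
        = -η j := by
      intro j
      simp [hηdef]
    have s1 : ∑ i, w.1 i * φ ((Pi.single i (1:ℝ) : Fin r → ℝ), (0 : Fin s → ℝ))
        = ∑ i, -(w.1 i * lam i) :=
      Finset.sum_congr rfl fun i _ => by rw [e1 i]; ring
    have s2 : ∑ j, w.2 j * φ ((0 : Fin r → ℝ), (Pi.single j (1:ℝ) : Fin s → ℝ))
        = ∑ j, -(w.2 j * η j) :=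
      Finset.sum_congr rfl fun j _ => by rw [e2 j]; ring
    rw [s1, s2, Finset.sum_neg_distrib, Finset.sum_neg_distrib]
    ring
  refine ⟨lam, η, u, hlam, hη, hupos, ?_, ?_⟩
  · rintro ⟨hl0, hη0, hu0⟩
    have h1 := hφO ones honesO
    rw [hrep ones, hl0, hη0, hu0] at h1
    simp at h1
  · intro x
    have hD : ((fun i => F i x), (fun j => G j x)) ∈ D :=
      ⟨x, fun i => le_refl _, fun j => le_refl _⟩
    have h1 := hφD _ hD
    rw [hrep] at h1
    have e1 : ∑ i, (fun i => F i x) i * lam i = ∑ i, lam i * F i x :=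
      Finset.sum_congr rfl fun i _ => mul_comm _ _
    have e2 : ∑ j, (fun j => G j x) j * η j = ∑ j, η j * G j x :=
      Finset.sum_congr rfl fun j _ => mul_comm _ _
    rw [e1, e2] at h1
    linarith

end Separation

section MoreHelpers

variable {m : Type*} [Fintype m]

lemma sos_nonneg {σ : Type*} {p : MvPolynomial σ ℝ} (h : IsSOS p) :
    ∀ x : σ → ℝ, 0 ≤ eval x p := by
  obtain ⟨k, q, rfl⟩ := h
  intro x
  rw [map_sum]
  exact Finset.sum_nonneg fun i _ => by rw [map_pow]; positivity

lemma sum_combo {ι : Type*} (t : Finset ι) (d : ι → ℝ) (A : ι → Matrix m m ℝ)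
    (bb : ι → m → ℝ) (cc : ι → ℝ) (x : m → ℝ) :
    ∑ i ∈ t, d i * (qf (A i) x + bb i ⬝ᵥ x + cc i)
      = qf (∑ i ∈ t, d i • A i) x + (∑ i ∈ t, d i • bb i) ⬝ᵥ x
        + ∑ i ∈ t, d i * cc i := by
  rw [qf_sum_smul, sum_smul_dot, ← Finset.sum_add_distrib, ← Finset.sum_add_distrib]
  exact Finset.sum_congr rfl fun i _ => by ring

lemma qf_matrix_add (A B : Matrix m m ℝ) (x : m → ℝ) :
    qf (A + B) x = qf A x + qf B x := by
  rw [qf, Matrix.add_mulVec, dotProduct_add]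

lemma qf_matrix_smul (c : ℝ) (A : Matrix m m ℝ) (x : m → ℝ) :
    qf (c • A) x = c * qf A x := by
  rw [qf, Matrix.smul_mulVec, dotProduct_smul, smul_eq_mul]

lemma qf_matrix_neg (A : Matrix m m ℝ) (x : m → ℝ) : qf (-A) x = -(qf A x) := by
  have : (-A : Matrix m m ℝ) = (-1 : ℝ) • A := by simp
  rw [this, qf_matrix_smul]
  ring

lemma isSymm_sum_smul {ι : Type*} (t : Finset ι) (d : ι → ℝ)
    {A : ι → Matrix m m ℝ} (h : ∀ i, (A i).IsSymm) :
    (∑ i ∈ t, d i • A i).IsSymm := by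
  rw [Matrix.IsSymm, Matrix.transpose_sum]
  exact Finset.sum_congr rfl fun i _ => by
    rw [Matrix.transpose_smul, h i]

lemma eval_comb {σ : Type*} {ι : Type*} (t : Finset ι) (d : ι → ℝ)
    (p : ι → MvPolynomial σ ℝ) (x : σ → ℝ) :
    eval x (∑ i ∈ t, MvPolynomial.C (d i) * p i) = ∑ i ∈ t, d i * eval x (p i) := by
  rw [map_sum]
  exact Finset.sum_congr rfl fun i _ => by rw [_root_.map_mul, eval_C]

lemma poly_eq_quadPoly_of_eval {p : MvPolynomial m ℝ} {A : Matrix m m ℝ}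
    {b : m → ℝ} {c : ℝ} (h : ∀ x, eval x p = qf A x + b ⬝ᵥ x + c) :
    p = quadPoly A b c := by
  apply MvPolynomial.funext
  intro x
  rw [h x, eval_quadPoly]

lemma qf_conj {n : ℕ} (A M : Matrix (Fin n) (Fin n) ℝ) (x : Fin n → ℝ) :
    qf (Mᵀ * A * M) x = qf A (M *ᵥ x) := by
  rw [qf, qf]
  have e1 : (Mᵀ * A * M) *ᵥ x = Mᵀ *ᵥ (A *ᵥ (M *ᵥ x)) := by
    rw [Matrix.mulVec_mulVec, Matrix.mulVec_mulVec]
  rw [e1, Matrix.dotProduct_mulVec, Matrix.vecMul_transpose]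

/-- composition of a quadratic with an affine map `x ↦ M x + w₀` -/
lemma compose_eval {n : ℕ} {A : Matrix (Fin n) (Fin n) ℝ} (hA : A.IsSymm)
    (b : Fin n → ℝ) (c : ℝ) (M : Matrix (Fin n) (Fin n) ℝ) (w₀ : Fin n → ℝ)
    (x : Fin n → ℝ) :
    qf (Mᵀ * A * M) x + (Mᵀ *ᵥ ((2:ℝ) • (A *ᵥ w₀) + b)) ⬝ᵥ x
        + (qf A w₀ + b ⬝ᵥ w₀ + c)
      = qf A (M *ᵥ x + w₀) + b ⬝ᵥ (M *ᵥ x + w₀) + c := by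
  have hdotT : ∀ (v z : Fin n → ℝ), v ⬝ᵥ (Mᵀ *ᵥ z) = (M *ᵥ v) ⬝ᵥ z := by
    intro v z
    rw [Matrix.dotProduct_mulVec, Matrix.vecMul_transpose]
  have h1 : qf (Mᵀ * A * M) x = qf A (M *ᵥ x) := by
    rw [qf, qf]
    have e1 : (Mᵀ * A * M) *ᵥ x = Mᵀ *ᵥ (A *ᵥ (M *ᵥ x)) := by
      rw [Matrix.mulVec_mulVec, Matrix.mulVec_mulVec]
    rw [e1, hdotT]
  have h2 : qf A (M *ᵥ x + w₀)
      = qf A (M *ᵥ x) + 2 * ((M *ᵥ x) ⬝ᵥ A *ᵥ w₀) + qf A w₀ := qf_add hA _ _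
  have h3 : (Mᵀ *ᵥ ((2:ℝ) • (A *ᵥ w₀) + b)) ⬝ᵥ x
      = 2 * ((M *ᵥ x) ⬝ᵥ A *ᵥ w₀) + (M *ᵥ x) ⬝ᵥ b := by
    rw [dotProduct_comm, hdotT, dotProduct_add,
      dotProduct_smul, smul_eq_mul]
  have h4 : b ⬝ᵥ (M *ᵥ x + w₀) = (M *ᵥ x) ⬝ᵥ b + b ⬝ᵥ w₀ := by
    rw [dotProduct_add]
    rw [dotProduct_comm]
  rw [h1, h2, h3, h4]
  ring

lemma exists_t {ι : Type*} [Fintype ι] (cmu lam : ι → ℝ) (hpos : ∀ i, 0 < lam i) :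
    ∃ t : ℝ, ∀ i, cmu i ≤ t * lam i := by
  refine ⟨∑ i, max (cmu i / lam i) 0, fun i => ?_⟩
  have h1 : cmu i / lam i ≤ ∑ k, max (cmu k / lam k) 0 := by
    refine le_trans (le_max_left _ 0) ?_
    exact Finset.single_le_sum (f := fun k => max (cmu k / lam k) 0)
      (fun k _ => le_max_right _ 0) (Finset.mem_univ i)
  rw [div_le_iff₀ (hpos i)] at h1
  linarith [h1]

lemma affine_farkas {n : ℕ} {ι : Type*} [Fintype ι] (bv : ι → Fin n → ℝ)
    (cc : ι → ℝ)
    (hinfeas : ¬ ∃ x : Fin n → ℝ, ∀ i, bv i ⬝ᵥ x + cc i = 0) :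
    ∃ d : ι → ℝ, (∀ x : Fin n → ℝ, ∑ i, d i * (bv i ⬝ᵥ x) = 0) ∧
      ∑ i, d i * cc i = -1 := by
  classical
  set Φ : EuclideanSpace ℝ (Fin n) →ₗ[ℝ] EuclideanSpace ℝ ι :=
    { toFun := fun x => WithLp.toLp 2 (fun i => bv i ⬝ᵥ toPi x)
      map_add' := by
        intro x y
        ext i
        exact dotProduct_add (bv i) (toPi x) (toPi y)
      map_smul' := by
        intro t x
        ext i
        simp only [RingHom.id_apply]
        have : bv i ⬝ᵥ (t • toPi x) = t * (bv i ⬝ᵥ toPi x) := by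
          rw [dotProduct_smul, smul_eq_mul]
        exact this } with hΦ
  set R := LinearMap.range Φ with hR
  set target : EuclideanSpace ℝ ι := WithLp.toLp 2 (fun i => -cc i) with htarget
  set d0 : EuclideanSpace ℝ ι := target - (R.orthogonalProjectionOnto target : EuclideanSpace ℝ ι)
    with hd0
  have hd0orth : d0 ∈ Rᗮ := Submodule.sub_starProjection_mem_orthogonal target
  have hd0Φ : ∀ x : EuclideanSpace ℝ (Fin n), (inner ℝ (Φ x) d0 : ℝ) = 0 :=
    fun x => (Submodule.mem_orthogonal R d0).1 hd0orth _ ⟨x, rfl⟩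
  have hd0ne : d0 ≠ 0 := by
    intro h0
    apply hinfeas
    have : target = (R.orthogonalProjectionOnto target : EuclideanSpace ℝ ι) := by
      have := sub_eq_zero.mp h0
      exact this
    have hmem : target ∈ R := by
      rw [this]
      exact SetLike.coe_mem _
    obtain ⟨x, hx⟩ := hmem
    refine ⟨toPi x, fun i => ?_⟩
    have : bv i ⬝ᵥ toPi x = -cc i := congrFun (congrArg WithLp.ofLp hx) i
    linarith
  have hdd : (0:ℝ) < inner ℝ d0 d0 := by
    rw [real_inner_self_eq_norm_sq]
    have := norm_pos_iff.mpr hd0ne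
    positivity
  have hdt : (inner ℝ target d0 : ℝ) = inner ℝ d0 d0 := by
    have h1 : target = d0 + (R.orthogonalProjectionOnto target : EuclideanSpace ℝ ι) := by
      rw [hd0]
      abel
    rw [h1, inner_add_left]
    have h2 : (inner ℝ ((R.orthogonalProjectionOnto target : EuclideanSpace ℝ ι)) d0 : ℝ) = 0 :=
      (Submodule.mem_orthogonal R d0).1 hd0orth _ (SetLike.coe_mem _)
    rw [h2]
    ring
  set γ : ℝ := inner ℝ d0 d0 with hγ
  refine ⟨fun i => d0 i / γ, ?_, ?_⟩
  · intro x
    have h1 := hd0Φ (toE x)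
    rw [inner_eq_dot] at h1
    have h2 : toPi (Φ (toE x)) ⬝ᵥ toPi d0 = ∑ i, (bv i ⬝ᵥ x) * d0 i := by
      rfl
    rw [h2] at h1
    have h3 : ∑ i, d0 i / γ * (bv i ⬝ᵥ x)
        = (1/γ) * ∑ i, (bv i ⬝ᵥ x) * d0 i := by
      rw [Finset.mul_sum]
      exact Finset.sum_congr rfl fun i _ => by ring
    rw [h3, h1]
    ring
  · have h1 : (inner ℝ target d0 : ℝ) = ∑ i, -cc i * d0 i := by
      rw [inner_eq_dot]
      rfl
    have h2 : ∑ i, d0 i / γ * cc i = (-1/γ) * ∑ i, -cc i * d0 i := by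
      rw [Finset.mul_sum]
      exact Finset.sum_congr rfl fun i _ => by ring
    rw [h2, ← h1, hdt]
    field_simp

end MoreHelpers

end
end CQAux

open CQAux

set_option maxHeartbeats 2000000 in
/-- Generalization of Motzkin's theorem to concave quadratic inequalities:
if `K = {x : fᵢ(x) ≥ 0, gⱼ(x) > 0}` is empty and the `fᵢ` satisfy NSOSC, then
there are `λᵢ ≥ 0`, `η₀, ηⱼ ≥ 0` and an SOS polynomial `h` of degree `≤ 2`
with `∑ᵢ λᵢ fᵢ + ∑ⱼ ηⱼ gⱼ + η₀ + h ≡ 0` and `η₀ + ∑ⱼ ηⱼ = 1`. -/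
theorem cq_motzkin_generalization (n r s : ℕ)
    (f : Fin r → MvPolynomial (Fin n) ℝ) (g : Fin s → MvPolynomial (Fin n) ℝ)
    (hf : ∀ i, IsCQ (f i)) (hg : ∀ j, IsCQ (g j))
    (hK : ¬ ∃ x : Fin n → ℝ,
      (∀ i, 0 ≤ MvPolynomial.eval x (f i)) ∧ (∀ j, 0 < MvPolynomial.eval x (g j)))
    (hnsosc : ¬ ∃ δ : Fin r → ℝ, (∀ i, 0 ≤ δ i) ∧
      IsSOS (-(∑ i, MvPolynomial.C (δ i) * f i)) ∧
      (∑ i, MvPolynomial.C (δ i) * f i) ≠ 0) :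
    ∃ (lam : Fin r → ℝ) (η₀ : ℝ) (η : Fin s → ℝ) (h : MvPolynomial (Fin n) ℝ),
      (∀ i, 0 ≤ lam i) ∧ 0 ≤ η₀ ∧ (∀ j, 0 ≤ η j) ∧
      IsSOS h ∧ h.totalDegree ≤ 2 ∧
      (∑ i, MvPolynomial.C (lam i) * f i) + (∑ j, MvPolynomial.C (η j) * g j)
        + MvPolynomial.C η₀ + h = 0 ∧
      η₀ + ∑ j, η j = 1 := by
  classical
  induction r using Nat.strong_induction_on generalizing g hg with
  | _ r IH =>
  choose Af bf cf hfp using hf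
  choose Ag bg cg hgp using hg
  have heval_f : ∀ i x, eval x (f i) = qf (Af i) x + bf i ⬝ᵥ x + cf i := by
    intro i x
    rw [(hfp i).2]
    exact eval_quadPoly _ _ _ _
  have heval_g : ∀ j x, eval x (g j) = qf (Ag j) x + bg j ⬝ᵥ x + cg j := by
    intro j x
    rw [(hgp j).2]
    exact eval_quadPoly _ _ _ _
  have hconc : ∀ (A : Matrix (Fin n) (Fin n) ℝ) (bb : Fin n → ℝ) (c : ℝ),
      IsNegSemidef A → ∀ (a b : ℝ) (x y : Fin n → ℝ), 0 ≤ a → 0 ≤ b → a + b = 1 →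
      a * (qf A x + bb ⬝ᵥ x + c) + b * (qf A y + bb ⬝ᵥ y + c)
        ≤ qf A (a • x + b • y) + bb ⬝ᵥ (a • x + b • y) + c := by
    intro A bb c hA a b x y ha hb hab
    have h1 := qf_concave hA.1 hA.2 ha hb hab x y
    have h2 : bb ⬝ᵥ (a • x + b • y) = a * (bb ⬝ᵥ x) + b * (bb ⬝ᵥ y) := by
      rw [dotProduct_add, dotProduct_smul, dotProduct_smul,
        smul_eq_mul, smul_eq_mul]
    have h3 : a * c + b * c = c := by rw [← add_mul, hab, one_mul]
    nlinarith [h1, h2, h3]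
  obtain ⟨lam0, η0, u, hlam0, hη0, hu, hnontriv, hsep⟩ :=
    separation (fun i x => eval x (f i)) (fun j x => eval x (g j))
      (fun i a b x y ha hb hab => by
        rw [heval_f, heval_f, heval_f]
        exact hconc _ _ _ (hfp i).1 a b x y ha hb hab)
      (fun j a b x y ha hb hab => by
        rw [heval_g, heval_g, heval_g]
        exact hconc _ _ _ (hgp j).1 a b x y ha hb hab)
      hK
  by_cases hcase : 0 < u + ∑ j, η0 j
  · -- Case A : direct normalization
    set cden : ℝ := u + ∑ j, η0 j with hcden
    set AA := (∑ i, lam0 i • Af i) + (∑ j, η0 j • Ag j) with hAA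
    set BB := (∑ i, lam0 i • bf i) + (∑ j, η0 j • bg j) with hBB
    set CC := (∑ i, lam0 i * cf i) + (∑ j, η0 j * cg j) + u with hCC
    have hSval : ∀ x, (∑ i, lam0 i * eval x (f i)) + (∑ j, η0 j * eval x (g j)) + u
        = qf AA x + BB ⬝ᵥ x + CC := by
      intro x
      have e1 : ∑ i, lam0 i * eval x (f i)
          = qf (∑ i, lam0 i • Af i) x + (∑ i, lam0 i • bf i) ⬝ᵥ x
            + ∑ i, lam0 i * cf i := by
        rw [← sum_combo]
        exact Finset.sum_congr rfl fun i _ => by rw [heval_f]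
      have e2 : ∑ j, η0 j * eval x (g j)
          = qf (∑ j, η0 j • Ag j) x + (∑ j, η0 j • bg j) ⬝ᵥ x
            + ∑ j, η0 j * cg j := by
        rw [← sum_combo]
        exact Finset.sum_congr rfl fun j _ => by rw [heval_g]
      rw [e1, e2, hAA, hBB, hCC, qf_matrix_add, add_dotProduct]
      ring
    have hSneg : ∀ x, qf AA x + BB ⬝ᵥ x + CC ≤ 0 := fun x => by
      rw [← hSval]; exact hsep x
    have hc'pos : (0:ℝ) < 1 / cden := by positivity
    have hsymmAA : AA.IsSymm :=
      Matrix.IsSymm.add (isSymm_sum_smul _ _ fun i => (hfp i).1.1)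
        (isSymm_sum_smul _ _ fun j => (hgp j).1.1)
    have hsymmAA' : ((-(1/cden)) • AA).IsSymm := by
      rw [Matrix.IsSymm, Matrix.transpose_smul, hsymmAA]
    have hvalh : ∀ x, qf ((-(1/cden)) • AA) x + ((-(1/cden)) • BB) ⬝ᵥ x
        + (-(1/cden) * CC) = (-(1/cden)) * (qf AA x + BB ⬝ᵥ x + CC) := by
      intro x
      rw [qf_matrix_smul, smul_dotProduct, smul_eq_mul]
      ring
    have hsos : IsSOS (quadPoly ((-(1/cden)) • AA) ((-(1/cden)) • BB)
        (-(1/cden) * CC)) := by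
      refine isSOS_quadPoly hsymmAA' fun x => ?_
      rw [hvalh]
      have := hSneg x
      nlinarith [this, hc'pos]
    refine ⟨fun i => lam0 i / cden, u / cden, fun j => η0 j / cden,
      quadPoly ((-(1/cden)) • AA) ((-(1/cden)) • BB) (-(1/cden) * CC),
      fun i => div_nonneg (hlam0 i) hcase.le, div_nonneg hu hcase.le,
      fun j => div_nonneg (hη0 j) hcase.le,
      hsos, totalDegree_quadPoly _ _ _, ?_, ?_⟩
    · apply MvPolynomial.funext
      intro x
      rw [map_zero, map_add, map_add, map_add, eval_C, eval_quadPoly]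
      rw [eval_comb, eval_comb, hvalh]
      have e5 : ∑ i, lam0 i / cden * eval x (f i)
          = (1/cden) * ∑ i, lam0 i * eval x (f i) := by
        rw [Finset.mul_sum]
        exact Finset.sum_congr rfl fun i _ => by ring
      have e6 : ∑ j, η0 j / cden * eval x (g j)
          = (1/cden) * ∑ j, η0 j * eval x (g j) := by
        rw [Finset.mul_sum]
        exact Finset.sum_congr rfl fun j _ => by ring
      rw [e5, e6, ← hSval x]
      field_simp
      ring
    · rw [← Finset.sum_div]
      rw [hcden, ← add_div]
      exact div_self (ne_of_gt (hcden ▸ hcase))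
  · -- Case B
    have hsum_nonneg : 0 ≤ ∑ j, η0 j := Finset.sum_nonneg fun j _ => hη0 j
    have hcase' : u + ∑ j, η0 j ≤ 0 := not_lt.mp hcase
    have hu0 : u = 0 := by linarith
    have hη00 : ∀ j, η0 j = 0 := by
      have hs0 : ∑ j, η0 j = 0 := by linarith
      intro j
      exact (Finset.sum_eq_zero_iff_of_nonneg (fun j _ => hη0 j)).1 hs0 j
        (Finset.mem_univ j)
    have hlamne : lam0 ≠ 0 := by
      intro h0
      exact hnontriv ⟨h0, funext hη00, hu0⟩
    have hsep0 : ∀ x, ∑ i, lam0 i * eval x (f i) ≤ 0 := by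
      intro x
      have h1 := hsep x
      have h2 : ∑ j, η0 j * eval x (g j) = 0 :=
        Finset.sum_eq_zero fun j _ => by rw [hη00 j]; ring
      rw [h2, hu0] at h1
      linarith
    set A0 := ∑ i, lam0 i • Af i with hA0
    set B0 := ∑ i, lam0 i • bf i with hB0
    set C0 := ∑ i, lam0 i * cf i with hC0
    have hval0 : ∀ x, ∑ i, lam0 i * eval x (f i) = qf A0 x + B0 ⬝ᵥ x + C0 := by
      intro x
      rw [← sum_combo]
      exact Finset.sum_congr rfl fun i _ => by rw [heval_f]
    have hA0symm : A0.IsSymm := isSymm_sum_smul _ _ fun i => (hfp i).1.1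
    have hP0 : (∑ i, MvPolynomial.C (lam0 i) * f i) = 0 := by
      by_contra hne
      refine hnsosc ⟨lam0, hlam0, ?_, hne⟩
      have hrepr : -(∑ i, MvPolynomial.C (lam0 i) * f i)
          = quadPoly (-A0) (-B0) (-C0) := by
        apply poly_eq_quadPoly_of_eval
        intro x
        rw [map_neg, eval_comb, hval0, qf_matrix_neg, neg_dotProduct]
        ring
      rw [hrepr]
      refine isSOS_quadPoly ?_ fun x => ?_
      · rw [Matrix.IsSymm, Matrix.transpose_neg, hA0symm]
      · rw [qf_matrix_neg, neg_dotProduct]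
        have := hsep0 x
        rw [hval0] at this
        linarith
    have hzero : ∀ x, qf A0 x + B0 ⬝ᵥ x + C0 = 0 := by
      intro x
      rw [← hval0, ← eval_comb Finset.univ lam0 f x, hP0, map_zero]
    have hkey : ∀ x, qf A0 x = 0 := by
      intro x
      have h1 := hzero x
      have hmx : (-x : Fin n → ℝ) = (-1 : ℝ) • x := by funext k; simp
      have hm := hzero (-x)
      rw [hmx, qf_smul, dotProduct_smul] at hm
      simp only [smul_eq_mul] at hm
      have h0 := hzero 0
      rw [qf, Matrix.mulVec_zero, dotProduct_zero, dotProduct_zero] at h0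
      nlinarith [h1, hm, h0]
    have hqfi : ∀ (x : Fin n → ℝ) (i : Fin r), lam0 i ≠ 0 → qf (Af i) x = 0 := by
      intro x i hi
      have h1 : ∑ k, lam0 k * qf (Af k) x = 0 := by
        rw [← qf_sum_smul]
        exact hkey x
      have h2 : ∀ k ∈ Finset.univ, lam0 k * qf (Af k) x ≤ 0 :=
        fun k _ => mul_nonpos_of_nonneg_of_nonpos (hlam0 k) ((hfp k).1.2 x)
      have h3 := (Finset.sum_eq_zero_iff_of_nonpos h2).1 h1 i (Finset.mem_univ i)
      rcases mul_eq_zero.1 h3 with h | h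
      · exact absurd h hi
      · exact h
    have haffeval : ∀ (i : Fin r), lam0 i ≠ 0 → ∀ x,
        eval x (f i) = bf i ⬝ᵥ x + cf i := by
      intro i hi x
      rw [heval_f, hqfi x i hi]
      ring
    set Sfin : Finset (Fin r) := Finset.univ.filter (fun i => lam0 i ≠ 0) with hSfin
    have hSmem : ∀ i, i ∈ Sfin ↔ lam0 i ≠ 0 := by
      intro i
      simp [hSfin]
    have hSne : Sfin.Nonempty := by
      obtain ⟨i, hi⟩ := Function.ne_iff.1 hlamne
      exact ⟨i, (hSmem i).2 hi⟩
    have hlam0off : ∀ i, i ∉ Sfin → lam0 i = 0 := by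
      intro i hi
      by_contra hni
      exact hi ((hSmem i).2 hni)
    have hpos : ∀ i : ↥Sfin, 0 < lam0 i.1 :=
      fun i => lt_of_le_of_ne (hlam0 i.1) (Ne.symm ((hSmem i.1).1 i.2))
    have hsumS : ∀ x, ∑ i ∈ Sfin, lam0 i * (bf i ⬝ᵥ x + cf i) = 0 := by
      intro x
      have h1 : ∑ i ∈ Sfin, lam0 i * (bf i ⬝ᵥ x + cf i)
          = ∑ i ∈ Sfin, lam0 i * eval x (f i) :=
        Finset.sum_congr rfl fun i hi => by rw [haffeval i ((hSmem i).1 hi)]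
      have h2 : ∑ i ∈ Sfin, lam0 i * eval x (f i) = ∑ i, lam0 i * eval x (f i) :=
        Finset.sum_subset (Finset.subset_univ _) (fun i _ hi => by
          rw [hlam0off i hi]; ring)
      have h3 : ∑ i, lam0 i * eval x (f i) = 0 := by
        rw [← eval_comb Finset.univ lam0 f x, hP0, map_zero]
      rw [h1, h2, h3]
    obtain ⟨M, hM1, hM2⟩ := exists_proj_matrix (fun i : ↥Sfin => bf i.1)
    by_cases hLne : ∃ x₀ : Fin n → ℝ, ∀ i : ↥Sfin, bf i.1 ⬝ᵥ x₀ + cf i.1 = 0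
    · -- Case B2 : the affine subspace L is nonempty; recurse on the projected system
      obtain ⟨x₀, hx₀⟩ := hLne
      set w₀ : Fin n → ℝ := x₀ - M *ᵥ x₀ with hw₀
      have hPmapaff : ∀ (x : Fin n → ℝ) (i : ↥Sfin),
          bf i.1 ⬝ᵥ (M *ᵥ x + w₀) + cf i.1 = 0 := by
        intro x i
        have h1 : bf i.1 ⬝ᵥ (M *ᵥ x) = 0 := hM1 x i
        have h2 : bf i.1 ⬝ᵥ (M *ᵥ x₀) = 0 := hM1 x₀ i
        have h3 := hx₀ i
        rw [dotProduct_add, h1, hw₀, dotProduct_sub, h2]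
        linarith
      have hPmapL : ∀ (x : Fin n → ℝ) (i : Fin r), i ∈ Sfin →
          eval (M *ᵥ x + w₀) (f i) = 0 := by
        intro x i hi
        rw [haffeval i ((hSmem i).1 hi)]
        exact hPmapaff x ⟨i, hi⟩
      have hPmapfix : ∀ x : Fin n → ℝ,
          (∀ i : ↥Sfin, bf i.1 ⬝ᵥ x + cf i.1 = 0) → M *ᵥ x + w₀ = x := by
        intro x hx
        have h1 : ∀ i : ↥Sfin, bf i.1 ⬝ᵥ (x - x₀) = 0 := by
          intro i
          rw [dotProduct_sub]
          have ha := hx i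
          have hb := hx₀ i
          linarith
        have h2 := hM2 (x - x₀) h1
        have h3 : M *ᵥ x = M *ᵥ (x - x₀) + M *ᵥ x₀ := by
          rw [← Matrix.mulVec_add, sub_add_cancel]
        rw [h3, h2, hw₀]
        abel
      set r' := Sfinᶜ.card with hr'
      set eqv : ↥(Sfinᶜ) ≃ Fin r' := (Sfinᶜ).equivFin with heqv
      have hr'lt : r' < r := by
        have h1 : Sfinᶜ.card = Fintype.card (Fin r) - Sfin.card := Finset.card_compl _
        have h2 : 0 < Sfin.card := Finset.card_pos.2 hSne
        have h3 : Sfin.card ≤ Fintype.card (Fin r) := Finset.card_le_univ _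
        rw [Fintype.card_fin] at h1 h3
        omega
      set oidx : Fin r' → Fin r := fun k => (eqv.symm k).1 with hoidx
      set f' : Fin r' → MvPolynomial (Fin n) ℝ := fun k =>
        quadPoly (Mᵀ * Af (oidx k) * M)
          (Mᵀ *ᵥ ((2:ℝ) • (Af (oidx k) *ᵥ w₀) + bf (oidx k)))
          (qf (Af (oidx k)) w₀ + bf (oidx k) ⬝ᵥ w₀ + cf (oidx k)) with hf'def
      set g' : Fin s → MvPolynomial (Fin n) ℝ := fun j =>
        quadPoly (Mᵀ * Ag j * M)
          (Mᵀ *ᵥ ((2:ℝ) • (Ag j *ᵥ w₀) + bg j))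
          (qf (Ag j) w₀ + bg j ⬝ᵥ w₀ + cg j) with hg'def
      have hevalf' : ∀ k x, eval x (f' k) = eval (M *ᵥ x + w₀) (f (oidx k)) := by
        intro k x
        rw [hf'def]
        rw [eval_quadPoly, heval_f]
        exact compose_eval (hfp (oidx k)).1.1 _ _ M w₀ x
      have hevalg' : ∀ j x, eval x (g' j) = eval (M *ᵥ x + w₀) (g j) := by
        intro j x
        rw [hg'def]
        rw [eval_quadPoly, heval_g]
        exact compose_eval (hgp j).1.1 _ _ M w₀ x
      have hsymmconj : ∀ A : Matrix (Fin n) (Fin n) ℝ, A.IsSymm →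
          (Mᵀ * A * M).IsSymm := by
        intro A hA
        calc (Mᵀ * A * M)ᵀ = Mᵀ * (Mᵀ * A)ᵀ := Matrix.transpose_mul _ _
          _ = Mᵀ * (Aᵀ * Mᵀᵀ) := by rw [Matrix.transpose_mul]
          _ = Mᵀ * (A * M) := by rw [Matrix.transpose_transpose, hA]
          _ = Mᵀ * A * M := (Matrix.mul_assoc _ _ _).symm
      have hf' : ∀ k, IsCQ (f' k) := by
        intro k
        refine ⟨_, _, _, ⟨hsymmconj _ (hfp (oidx k)).1.1, fun x => ?_⟩, rfl⟩
        rw [show (x ⬝ᵥ (Mᵀ * Af (oidx k) * M).mulVec x) = qf (Mᵀ * Af (oidx k) * M) x from rfl,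
          qf_conj]
        exact (hfp (oidx k)).1.2 _
      have hg' : ∀ j, IsCQ (g' j) := by
        intro j
        refine ⟨_, _, _, ⟨hsymmconj _ (hgp j).1.1, fun x => ?_⟩, rfl⟩
        rw [show (x ⬝ᵥ (Mᵀ * Ag j * M).mulVec x) = qf (Mᵀ * Ag j * M) x from rfl,
          qf_conj]
        exact (hgp j).1.2 _
      have hK' : ¬ ∃ x : Fin n → ℝ,
          (∀ k, 0 ≤ eval x (f' k)) ∧ (∀ j, 0 < eval x (g' j)) := by
        rintro ⟨x, hx1, hx2⟩
        refine hK ⟨M *ᵥ x + w₀, fun i => ?_, fun j => ?_⟩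
        · by_cases hi : i ∈ Sfin
          · rw [hPmapL x i hi]
          · have hic : i ∈ Sfinᶜ := Finset.mem_compl.2 hi
            have h1 := hx1 (eqv ⟨i, hic⟩)
            rw [hevalf'] at h1
            have heq : oidx (eqv ⟨i, hic⟩) = i := by
              rw [hoidx]
              simp
            rwa [heq] at h1
        · have h1 := hx2 j
          rwa [hevalg'] at h1
      -- coefficient recombination machinery
      have hextend : ∀ (w : Fin r' → ℝ) (cv : ↥Sfin → ℝ) (tt : ℝ),
          ∃ dd : Fin r → ℝ,
            (∀ i (h : i ∈ Sfin), dd i = tt * lam0 i - cv ⟨i, h⟩) ∧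
            (∀ i (h : i ∈ Sfinᶜ), dd i = w (eqv ⟨i, h⟩)) ∧
            (∀ x, ∑ i, dd i * eval x (f i)
              = (∑ k, w k * eval x (f (oidx k)))
                - ∑ i : ↥Sfin, cv i * (bf i.1 ⬝ᵥ x + cf i.1)) := by
        intro w cv tt
        refine ⟨fun i => if h : i ∈ Sfin then tt * lam0 i - cv ⟨i, h⟩
          else w (eqv ⟨i, Finset.mem_compl.2 h⟩), fun i h => dif_pos h,
          fun i h => ?_, fun x => ?_⟩
        · have h' : i ∉ Sfin := Finset.mem_compl.1 h
          simp only [dif_neg h']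
        · beta_reduce
          rw [← Finset.sum_add_sum_compl Sfin]
          have e1 : ∑ i ∈ Sfin, (if h : i ∈ Sfin then tt * lam0 i - cv ⟨i, h⟩
              else w (eqv ⟨i, Finset.mem_compl.2 h⟩)) * eval x (f i)
              = tt * (∑ i ∈ Sfin, lam0 i * (bf i ⬝ᵥ x + cf i))
                - ∑ i : ↥Sfin, cv i * (bf i.1 ⬝ᵥ x + cf i.1) := by
            rw [← Finset.sum_coe_sort Sfin
              (fun i => lam0 i * (bf i ⬝ᵥ x + cf i))]
            rw [Finset.mul_sum, ← Finset.sum_sub_distrib]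
            rw [← Finset.sum_coe_sort Sfin (fun i => (if h : i ∈ Sfin then
              tt * lam0 i - cv ⟨i, h⟩ else w (eqv ⟨i, Finset.mem_compl.2 h⟩))
              * eval x (f i))]
            refine Finset.sum_congr rfl fun a _ => ?_
            rw [dif_pos a.2, haffeval a.1 ((hSmem a.1).1 a.2)]
            ring
          have e2 : ∑ i ∈ Sfinᶜ, (if h : i ∈ Sfin then tt * lam0 i - cv ⟨i, h⟩
              else w (eqv ⟨i, Finset.mem_compl.2 h⟩)) * eval x (f i)
              = ∑ k, w k * eval x (f (oidx k)) := by
            rw [← Finset.sum_coe_sort (Sfinᶜ)]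
            rw [← Equiv.sum_comp eqv.symm (fun a : ↥(Sfinᶜ) =>
              (if h : a.1 ∈ Sfin then tt * lam0 a.1 - cv ⟨a.1, h⟩
                else w (eqv ⟨a.1, Finset.mem_compl.2 h⟩)) * eval x (f a.1))]
            refine Finset.sum_congr rfl fun k _ => ?_
            have ha : (eqv.symm k).1 ∉ Sfin := Finset.mem_compl.1 (eqv.symm k).2
            rw [dif_neg ha]
            have : eqv ⟨(eqv.symm k).1, Finset.mem_compl.2 ha⟩ = k := by
              have : (⟨(eqv.symm k).1, Finset.mem_compl.2 ha⟩ : ↥(Sfinᶜ))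
                  = eqv.symm k := Subtype.ext rfl
              rw [this, Equiv.apply_symm_apply]
            rw [this, hoidx]
          rw [e1, e2, hsumS]
          ring
      -- NSOSC for the projected system
      have hnsosc' : ¬ ∃ δ : Fin r' → ℝ, (∀ k, 0 ≤ δ k) ∧
          IsSOS (-(∑ k, MvPolynomial.C (δ k) * f' k)) ∧
          (∑ k, MvPolynomial.C (δ k) * f' k) ≠ 0 := by
        rintro ⟨δ', hδ'0, hδ'sos, hδ'ne⟩
        set DA := ∑ k, δ' k • Af (oidx k) with hDA
        set DB := ∑ k, δ' k • bf (oidx k) with hDB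
        set DC := ∑ k, δ' k * cf (oidx k) with hDC
        have hOrig : ∀ y, ∑ k, δ' k * eval y (f (oidx k))
            = qf DA y + DB ⬝ᵥ y + DC := by
          intro y
          rw [← sum_combo]
          exact Finset.sum_congr rfl fun k _ => by rw [heval_f]
        have hDAsymm : DA.IsSymm := isSymm_sum_smul _ _ fun k => (hfp _).1.1
        have hDAneg : ∀ y, qf DA y ≤ 0 := by
          intro y
          rw [hDA, qf_sum_smul]
          exact Finset.sum_nonpos fun k _ =>
            mul_nonpos_of_nonneg_of_nonpos (hδ'0 k) ((hfp _).1.2 y)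
        have hqL : ∀ y : Fin n → ℝ, (∀ i : ↥Sfin, bf i.1 ⬝ᵥ y + cf i.1 = 0) →
            qf DA y + DB ⬝ᵥ y + DC ≤ 0 := by
          intro y hy
          rw [← hOrig]
          have h2 := sos_nonneg hδ'sos y
          rw [map_neg] at h2
          have h1 : eval y (∑ k, MvPolynomial.C (δ' k) * f' k) ≤ 0 := by linarith
          rw [eval_comb] at h1
          have h3 : ∑ k, δ' k * eval y (f' k)
              = ∑ k, δ' k * eval y (f (oidx k)) := by
            refine Finset.sum_congr rfl fun k _ => ?_
            rw [hevalf', hPmapfix y hy]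
          rwa [h3] at h1
        obtain ⟨cmu, hcmu⟩ := extension_lemma hDAsymm hDAneg
          (fun i : ↥Sfin => bf i.1) (fun i => cf i.1) DB DC x₀ hx₀ hqL
        obtain ⟨t, ht⟩ := exists_t cmu (fun i : ↥Sfin => lam0 i.1) hpos
        obtain ⟨dd, hdd1, hdd2, hdd3⟩ := hextend δ' cmu t
        have hddpos : ∀ i, 0 ≤ dd i := by
          intro i
          by_cases h : i ∈ Sfin
          · rw [hdd1 i h]
            have := ht ⟨i, h⟩
            linarith
          · rw [hdd2 i (Finset.mem_compl.2 h)]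
            exact hδ'0 _
        have hddval : ∀ x, ∑ i, dd i * eval x (f i) ≤ 0 := by
          intro x
          rw [hdd3, hOrig]
          have := hcmu x
          linarith
        set FA := ∑ i, dd i • Af i with hFA
        set FB := ∑ i, dd i • bf i with hFB
        set FC := ∑ i, dd i * cf i with hFC
        have hFval : ∀ x, ∑ i, dd i * eval x (f i) = qf FA x + FB ⬝ᵥ x + FC := by
          intro x
          rw [← sum_combo]
          exact Finset.sum_congr rfl fun i _ => by rw [heval_f]
        have hFsymm : FA.IsSymm := isSymm_sum_smul _ _ fun i => (hfp i).1.1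
        have hddne : (∑ i, MvPolynomial.C (dd i) * f i) ≠ 0 := by
          have hxhat : ∃ xh, eval xh (∑ k, MvPolynomial.C (δ' k) * f' k) ≠ 0 := by
            by_contra hall
            push_neg at hall
            exact hδ'ne (MvPolynomial.funext fun x => by rw [hall x, map_zero])
          obtain ⟨xh, hxh⟩ := hxhat
          intro h0
          apply hxh
          rw [eval_comb]
          have h3 : ∑ k, δ' k * eval xh (f' k)
              = ∑ k, δ' k * eval (M *ᵥ xh + w₀) (f (oidx k)) := by
            refine Finset.sum_congr rfl fun k _ => ?_
            rw [hevalf']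
          rw [h3]
          have h4 : ∑ i, dd i * eval (M *ᵥ xh + w₀) (f i) = 0 := by
            rw [← eval_comb Finset.univ dd f, h0, map_zero]
          rw [hdd3] at h4
          have h5 : ∑ i : ↥Sfin, cmu i * (bf i.1 ⬝ᵥ (M *ᵥ xh + w₀) + cf i.1) = 0 :=
            Finset.sum_eq_zero fun i _ => by rw [hPmapaff xh i]; ring
          rw [h5] at h4
          linarith [h4]
        refine hnsosc ⟨dd, hddpos, ?_, hddne⟩
        have hrepr : -(∑ i, MvPolynomial.C (dd i) * f i)
            = quadPoly (-FA) (-FB) (-FC) := by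
          apply poly_eq_quadPoly_of_eval
          intro x
          rw [map_neg, eval_comb, hFval, qf_matrix_neg, neg_dotProduct]
          ring
        rw [hrepr]
        refine isSOS_quadPoly ?_ fun x => ?_
        · rw [Matrix.IsSymm, Matrix.transpose_neg, hFsymm]
        · rw [qf_matrix_neg, neg_dotProduct]
          have h1 := hddval x
          rw [hFval] at h1
          linarith
      obtain ⟨lam', η₀', η', h', hlam', hη₀', hη', hsos', hdeg', hid', hnorm'⟩ :=
        IH r' hr'lt f' g' hf' hg' hK' hnsosc'
      -- lift the certificate back
      set TA := (∑ k, lam' k • Af (oidx k)) + (∑ j, η' j • Ag j) with hTA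
      set TB := (∑ k, lam' k • bf (oidx k)) + (∑ j, η' j • bg j) with hTB
      set TC := ((∑ k, lam' k * cf (oidx k)) + (∑ j, η' j * cg j)) + η₀' with hTC
      have hTval : ∀ y, (∑ k, lam' k * eval y (f (oidx k)))
          + (∑ j, η' j * eval y (g j)) + η₀' = qf TA y + TB ⬝ᵥ y + TC := by
        intro y
        have e1 : ∑ k, lam' k * eval y (f (oidx k))
            = qf (∑ k, lam' k • Af (oidx k)) y
              + (∑ k, lam' k • bf (oidx k)) ⬝ᵥ y + ∑ k, lam' k * cf (oidx k) := by
          rw [← sum_combo]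
          exact Finset.sum_congr rfl fun k _ => by rw [heval_f]
        have e2 : ∑ j, η' j * eval y (g j)
            = qf (∑ j, η' j • Ag j) y + (∑ j, η' j • bg j) ⬝ᵥ y
              + ∑ j, η' j * cg j := by
          rw [← sum_combo]
          exact Finset.sum_congr rfl fun j _ => by rw [heval_g]
        rw [e1, e2, hTA, hTB, hTC, qf_matrix_add, add_dotProduct]
        ring
      have hTsymm : TA.IsSymm :=
        Matrix.IsSymm.add (isSymm_sum_smul _ _ fun k => (hfp _).1.1)
          (isSymm_sum_smul _ _ fun j => (hgp j).1.1)
      have hTneg : ∀ y, qf TA y ≤ 0 := by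
        intro y
        rw [hTA, qf_matrix_add, qf_sum_smul, qf_sum_smul]
        have h1 : ∑ k, lam' k * qf (Af (oidx k)) y ≤ 0 :=
          Finset.sum_nonpos fun k _ =>
            mul_nonpos_of_nonneg_of_nonpos (hlam' k) ((hfp _).1.2 y)
        have h2 : ∑ j, η' j * qf (Ag j) y ≤ 0 :=
          Finset.sum_nonpos fun j _ =>
            mul_nonpos_of_nonneg_of_nonpos (hη' j) ((hgp j).1.2 y)
        linarith
      have hqLT : ∀ y : Fin n → ℝ, (∀ i : ↥Sfin, bf i.1 ⬝ᵥ y + cf i.1 = 0) →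
          qf TA y + TB ⬝ᵥ y + TC ≤ 0 := by
        intro y hy
        rw [← hTval]
        have h1 := congrArg (eval y) hid'
        rw [map_zero, map_add, map_add, map_add, eval_C, eval_comb, eval_comb] at h1
        have h2 := sos_nonneg hsos' y
        have h3 : ∑ k, lam' k * eval y (f' k)
            = ∑ k, lam' k * eval y (f (oidx k)) := by
          refine Finset.sum_congr rfl fun k _ => ?_
          rw [hevalf', hPmapfix y hy]
        have h4 : ∑ j, η' j * eval y (g' j) = ∑ j, η' j * eval y (g j) := by
          refine Finset.sum_congr rfl fun j _ => ?_
          rw [hevalg', hPmapfix y hy]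
        rw [h3, h4] at h1
        linarith
      obtain ⟨cmu, hcmu⟩ := extension_lemma hTsymm hTneg
        (fun i : ↥Sfin => bf i.1) (fun i => cf i.1) TB TC x₀ hx₀ hqLT
      obtain ⟨t, ht⟩ := exists_t cmu (fun i : ↥Sfin => lam0 i.1) hpos
      obtain ⟨dd, hdd1, hdd2, hdd3⟩ := hextend lam' cmu t
      have hddpos : ∀ i, 0 ≤ dd i := by
        intro i
        by_cases h : i ∈ Sfin
        · rw [hdd1 i h]
          have := ht ⟨i, h⟩
          linarith
        · rw [hdd2 i (Finset.mem_compl.2 h)]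
          exact hlam' _
      have hddval : ∀ x, (∑ i, dd i * eval x (f i)) + (∑ j, η' j * eval x (g j))
          + η₀' ≤ 0 := by
        intro x
        rw [hdd3]
        have h1 := hcmu x
        rw [← hTval] at h1
        linarith
      set FA := (∑ i, dd i • Af i) + (∑ j, η' j • Ag j) with hFA
      set FB := (∑ i, dd i • bf i) + (∑ j, η' j • bg j) with hFB
      set FC := ((∑ i, dd i * cf i) + (∑ j, η' j * cg j)) + η₀' with hFC
      have hFval : ∀ x, (∑ i, dd i * eval x (f i)) + (∑ j, η' j * eval x (g j))
          + η₀' = qf FA x + FB ⬝ᵥ x + FC := by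
        intro x
        have e1 : ∑ i, dd i * eval x (f i)
            = qf (∑ i, dd i • Af i) x + (∑ i, dd i • bf i) ⬝ᵥ x
              + ∑ i, dd i * cf i := by
          rw [← sum_combo]
          exact Finset.sum_congr rfl fun i _ => by rw [heval_f]
        have e2 : ∑ j, η' j * eval x (g j)
            = qf (∑ j, η' j • Ag j) x + (∑ j, η' j • bg j) ⬝ᵥ x
              + ∑ j, η' j * cg j := by
          rw [← sum_combo]
          exact Finset.sum_congr rfl fun j _ => by rw [heval_g]
        rw [e1, e2, hFA, hFB, hFC, qf_matrix_add, add_dotProduct]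
        ring
      have hFsymm : FA.IsSymm :=
        Matrix.IsSymm.add (isSymm_sum_smul _ _ fun i => (hfp i).1.1)
          (isSymm_sum_smul _ _ fun j => (hgp j).1.1)
      have hsosF : IsSOS (quadPoly (-FA) (-FB) (-FC)) := by
        refine isSOS_quadPoly ?_ fun x => ?_
        · rw [Matrix.IsSymm, Matrix.transpose_neg, hFsymm]
        · rw [qf_matrix_neg, neg_dotProduct]
          have h1 := hddval x
          rw [hFval] at h1
          linarith
      refine ⟨dd, η₀', η', quadPoly (-FA) (-FB) (-FC), hddpos, hη₀', hη',
        hsosF, totalDegree_quadPoly _ _ _, ?_, hnorm'⟩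
      apply MvPolynomial.funext
      intro x
      rw [map_zero, map_add, map_add, map_add, eval_C, eval_quadPoly,
        eval_comb, eval_comb]
      rw [qf_matrix_neg, neg_dotProduct]
      have h1 := hFval x
      linarith
    · -- Case B1 : the affine subspace L is empty; Farkas certificate
      obtain ⟨d, hd1, hd2⟩ := affine_farkas (fun i : ↥Sfin => bf i.1)
        (fun i => cf i.1) hLne
      obtain ⟨t, ht⟩ := exists_t (fun i : ↥Sfin => -d i)
        (fun i : ↥Sfin => lam0 i.1) hpos
      set dext : Fin r → ℝ := fun i => if h : i ∈ Sfin then d ⟨i, h⟩ else 0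
        with hdext
      set lamB : Fin r → ℝ := fun i => dext i + t * lam0 i with hlamB
      have hlamBpos : ∀ i, 0 ≤ lamB i := by
        intro i
        rw [hlamB]
        by_cases h : i ∈ Sfin
        · simp only [hdext, dif_pos h]
          have := ht ⟨i, h⟩
          simp only at this
          linarith
        · simp only [hdext, dif_neg h, hlam0off i h]
          ring_nf
          exact le_refl 0
      have hsumlamB : ∀ x, ∑ i, lamB i * eval x (f i) = -1 := by
        intro x
        have e0 : ∀ i, lamB i * eval x (f i)
            = dext i * eval x (f i) + t * (lam0 i * eval x (f i)) := by
          intro i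
          rw [hlamB]
          ring
        rw [Finset.sum_congr rfl fun i _ => e0 i, Finset.sum_add_distrib,
          ← Finset.mul_sum]
        have h3 : ∑ i, lam0 i * eval x (f i) = 0 := by
          rw [← eval_comb Finset.univ lam0 f x, hP0, map_zero]
        rw [h3, mul_zero, add_zero]
        have e1 : ∑ i, dext i * eval x (f i) = ∑ i ∈ Sfin, dext i * eval x (f i) :=
          (Finset.sum_subset (Finset.subset_univ _) (fun i _ hi => by
            simp only [hdext, dif_neg hi]
            ring)).symm
        have e2 : ∑ i ∈ Sfin, dext i * eval x (f i)
            = ∑ i : ↥Sfin, d i * (bf i.1 ⬝ᵥ x + cf i.1) := by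
          rw [← Finset.sum_coe_sort Sfin (fun i => dext i * eval x (f i))]
          refine Finset.sum_congr rfl fun a _ => ?_
          simp only [hdext, dif_pos a.2]
          rw [haffeval a.1 ((hSmem a.1).1 a.2)]
        have e3 : ∑ i : ↥Sfin, d i * (bf i.1 ⬝ᵥ x + cf i.1)
            = (∑ i : ↥Sfin, d i * (bf i.1 ⬝ᵥ x))
              + ∑ i : ↥Sfin, d i * cf i.1 := by
          rw [← Finset.sum_add_distrib]
          exact Finset.sum_congr rfl fun i _ => by ring
        rw [e1, e2, e3, hd1 x, hd2]
        ring
      refine ⟨lamB, 1, fun _ => 0, 0, hlamBpos, zero_le_one, fun j => le_refl 0,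
        ⟨0, fun k => 0, by simp⟩, by simp, ?_, by simp⟩
      apply MvPolynomial.funext
      intro x
      rw [map_zero, map_add, map_add, map_add, eval_C, map_zero, eval_comb]
      have h2 : ∑ j, (0:ℝ) * eval x (g j) = 0 :=
        Finset.sum_eq_zero fun j _ => by ring
      have h1 : eval x (∑ j, MvPolynomial.C (0:ℝ) * g j) = 0 := by
        rw [eval_comb]
        exact h2
      rw [h1, hsumlamB]
      ring
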